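/- Let A = (M₁+φ) − (N₁+φ) be a splitting of A ∈ ℝ^{n×n} with φ diagonal and φ₁, φ₂ positive diagonal, and suppose M_{φ₁} + φ_{φ₁} + φ₂ is nonsingular. Let G ≥ 0 be a matrix with |ψ(x) − ψ(y)| ≤ G|x − y| for all x, y ∈ ℝⁿ, and set L = |(M_{φ₁}+φ_{φ₁}+φ₂)⁻¹| (|N_{φ₁}+φ_{φ₁}| + |A_{φ₁}−φ₂| + 2φ₂G). If ρ(L) < 1 and z* ∈ ℝⁿ is a solution of ICP(q,A,ψ), then for every initial vector z⁰ ∈ ℝⁿ the sequence generated by Method 3.1 converges to z*, and z* is the unique solution of ICP(q,A,ψ). -/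

import Mathlib

open Matrix Finset

noncomputable def specRad {n : ℕ} (A : Matrix (Fin n) (Fin n) ℝ) : ℝ :=
  (spectralRadius ℂ (A.map (algebraMap ℝ ℂ))).toReal

def matAbs {n : ℕ} (A : Matrix (Fin n) (Fin n) ℝ) : Matrix (Fin n) (Fin n) ℝ :=
  fun i j => |A i j|

def vecAbs {n : ℕ} (x : Fin n → ℝ) : Fin n → ℝ := fun i => |x i|

def cmpMat {n : ℕ} (A : Matrix (Fin n) (Fin n) ℝ) : Matrix (Fin n) (Fin n) ℝ :=
  fun i j => if i = j then |A i j| else -|A i j|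

def PosDiag {n : ℕ} (Φ : Matrix (Fin n) (Fin n) ℝ) : Prop :=
  Φ.IsDiag ∧ ∀ i, 0 < Φ i i

def ZMat {n : ℕ} (A : Matrix (Fin n) (Fin n) ℝ) : Prop :=
  ∀ i j, i ≠ j → A i j ≤ 0

def NonsingularMMatrix {n : ℕ} (A : Matrix (Fin n) (Fin n) ℝ) : Prop :=
  ZMat A ∧ IsUnit A.det ∧ ∀ i j, 0 ≤ A⁻¹ i j

def SDD {n : ℕ} (A : Matrix (Fin n) (Fin n) ℝ) : Prop :=
  ∀ i, ∑ j ∈ Finset.univ.erase i, |A i j| < |A i i|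

def ICPsol {n : ℕ} (A : Matrix (Fin n) (Fin n) ℝ) (q : Fin n → ℝ)
    (ψ : (Fin n → ℝ) → (Fin n → ℝ)) (z : Fin n → ℝ) : Prop :=
  (∀ i, 0 ≤ (A *ᵥ z + q) i) ∧ (∀ i, 0 ≤ (z - ψ z) i) ∧ (A *ᵥ z + q) ⬝ᵥ (z - ψ z) = 0

def HplusMatrix {n : ℕ} (A : Matrix (Fin n) (Fin n) ℝ) : Prop :=
  NonsingularMMatrix (cmpMat A) ∧ ∀ i, 0 < A i i

section Aux
open Filter Topology
open scoped ENNReal NNReal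

attribute [local instance] Matrix.linftyOpSemiNormedRing Matrix.linftyOpNormedRing
  Matrix.linftyOpNormedAlgebra

private lemma matrix_complete {n : ℕ} : CompleteSpace (Matrix (Fin n) (Fin n) ℂ) :=
  inferInstance

attribute [local instance] matrix_complete

private lemma entry_norm_le {n : ℕ} (M : Matrix (Fin n) (Fin n) ℂ) (i j : Fin n) :
    ‖M i j‖ ≤ ‖M‖ := by
  have h1 : ‖M i j‖₊ ≤ ‖M‖₊ := by
    rw [Matrix.linfty_opNNNorm_def]
    calc ‖M i j‖₊ ≤ ∑ j' : Fin n, ‖M i j'‖₊ :=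
          Finset.single_le_sum (f := fun j' => ‖M i j'‖₊) (fun _ _ => zero_le) (Finset.mem_univ j)
      _ ≤ _ := Finset.le_sup (f := fun i => ∑ j : Fin n, ‖M i j‖₊) (Finset.mem_univ i)
  exact_mod_cast h1

set_option maxHeartbeats 1000000 in
lemma pow_entry_tendsto_zero {n : ℕ} (L : Matrix (Fin n) (Fin n) ℝ)
    (h : specRad L < 1) (i j : Fin n) :
    Filter.Tendsto (fun k => (L ^ k) i j) Filter.atTop (nhds 0) := by
  haveI hne : Nonempty (Fin n) := ⟨i⟩
  set M : Matrix (Fin n) (Fin n) ℂ := L.map (algebraMap ℝ ℂ) with hM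
  have hfin : spectralRadius ℂ M ≠ ⊤ :=
    ((spectrum.spectralRadius_le_nnnorm (𝕜 := ℂ) M).trans_lt ENNReal.coe_lt_top).ne
  have hρ : spectralRadius ℂ M < 1 := by
    have h1 : (spectralRadius ℂ M).toReal < (1 : ℝ≥0∞).toReal := by
      simpa [specRad, hM] using h
    exact (ENNReal.toReal_lt_toReal hfin ENNReal.one_ne_top).mp h1
  obtain ⟨r, hr1, hr2⟩ := exists_between hρ
  have hrtop : r ≠ ⊤ := (hr2.trans ENNReal.one_lt_top).ne
  have hgel := spectrum.pow_nnnorm_pow_one_div_tendsto_nhds_spectralRadius M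
  have hev : ∀ᶠ k : ℕ in atTop, (‖M ^ k‖₊ : ℝ≥0∞) ^ (1 / (k : ℝ)) < r :=
    hgel.eventually_lt_const hr1
  set c : ℝ := r.toReal with hc
  have hc1 : c < 1 := by
    have := (ENNReal.toReal_lt_toReal hrtop ENNReal.one_ne_top).mpr hr2
    simpa using this
  have hc0 : 0 ≤ c := ENNReal.toReal_nonneg
  have hbound : ∀ᶠ k : ℕ in atTop, ‖M ^ k‖ ≤ c ^ k := by
    filter_upwards [hev, eventually_ge_atTop 1] with k hk hk1
    have hk0 : (k : ℝ) ≠ 0 := by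
      have : k ≠ 0 := Nat.one_le_iff_ne_zero.mp hk1
      exact_mod_cast this
    have h2 : ((‖M ^ k‖₊ : ℝ≥0∞) ^ (1 / (k : ℝ))) ^ (k : ℝ) ≤ r ^ (k : ℝ) :=
      ENNReal.rpow_le_rpow hk.le (by positivity)
    rw [← ENNReal.rpow_mul, one_div, inv_mul_cancel₀ hk0, ENNReal.rpow_one,
      ENNReal.rpow_natCast] at h2
    have h3 := ENNReal.toReal_mono (ENNReal.pow_ne_top hrtop) h2
    simpa [ENNReal.toReal_pow] using h3
  have hnorm0 : Tendsto (fun k => ‖M ^ k‖) atTop (𝓝 0) :=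
    tendsto_of_tendsto_of_tendsto_of_le_of_le' tendsto_const_nhds
      (tendsto_pow_atTop_nhds_zero_of_lt_one hc0 hc1)
      (Filter.Eventually.of_forall fun k => norm_nonneg _) hbound
  have hMk : ∀ k : ℕ, M ^ k = (L ^ k).map (algebraMap ℝ ℂ) := by
    intro k
    rw [hM, ← RingHom.mapMatrix_apply, ← RingHom.mapMatrix_apply, map_pow]
  refine squeeze_zero_norm (fun k => ?_) hnorm0
  have h4 := entry_norm_le (M ^ k) i j
  have h5 : (M ^ k) i j = ((L ^ k) i j : ℂ) := by rw [hMk k]; rfl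
  rw [h5] at h4
  simpa using h4

end Aux

private lemma diag_mulVec {n : ℕ} {D : Matrix (Fin n) (Fin n) ℝ} (hD : D.IsDiag)
    (v : Fin n → ℝ) (i : Fin n) : (D *ᵥ v) i = D i i * v i := by
  simp only [Matrix.mulVec, dotProduct]
  rw [Finset.sum_eq_single i]
  · intro b _ hb
    rw [hD (Ne.symm hb), zero_mul]
  · intro h
    exact absurd (Finset.mem_univ i) h

private lemma abs_mulVec_le {n : ℕ} (B : Matrix (Fin n) (Fin n) ℝ) (v : Fin n → ℝ) (i : Fin n) :
    |(B *ᵥ v) i| ≤ (matAbs B *ᵥ vecAbs v) i := by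
  simp only [Matrix.mulVec, dotProduct, matAbs, vecAbs]
  exact (Finset.abs_sum_le_sum_abs _ _).trans
    (le_of_eq (Finset.sum_congr rfl fun j _ => abs_mul _ _))

private lemma mulVec_mono {n : ℕ} {B : Matrix (Fin n) (Fin n) ℝ} (hB : ∀ i j, 0 ≤ B i j)
    {u v : Fin n → ℝ} (h : ∀ i, u i ≤ v i) (i : Fin n) : (B *ᵥ u) i ≤ (B *ᵥ v) i := by
  simp only [Matrix.mulVec, dotProduct]
  exact Finset.sum_le_sum fun j _ => mul_le_mul_of_nonneg_left (h j) (hB i j)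

/-- convergence of Method 3.1 when ρ(L) < 1 (Theorem 4.1). -/
theorem stmt_4 {n : ℕ} (A M₁ N₁ φ φ₁ φ₂ G : Matrix (Fin n) (Fin n) ℝ)
    (q : Fin n → ℝ) (ψ : (Fin n → ℝ) → (Fin n → ℝ))
    (hsplit : A = (M₁ + φ) - (N₁ + φ))
    (hφ : φ.IsDiag) (hφ₁ : PosDiag φ₁) (hφ₂ : PosDiag φ₂)
    (hns : IsUnit (φ₁ * M₁ + φ₁ * φ + φ₂).det)
    (hG : ∀ i j, 0 ≤ G i j)
    (hψ : ∀ x y : Fin n → ℝ, ∀ i, |ψ x i - ψ y i| ≤ (G *ᵥ vecAbs (x - y)) i)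
    (hρ : specRad (matAbs ((φ₁ * M₁ + φ₁ * φ + φ₂)⁻¹) *
      (matAbs (φ₁ * N₁ + φ₁ * φ) + matAbs (φ₁ * A - φ₂) + 2 • (φ₂ * G))) < 1)
    (zstar : Fin n → ℝ) (hz : ICPsol A q ψ zstar)
    (z : ℕ → Fin n → ℝ)
    (hit : ∀ k, z (k + 1) = (φ₁ * M₁ + φ₁ * φ + φ₂)⁻¹ *ᵥ
      ((φ₁ * N₁ + φ₁ * φ) *ᵥ z k +
        vecAbs ((φ₁ * A - φ₂) *ᵥ z k + φ₁ *ᵥ q + φ₂ *ᵥ ψ (z k)) -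
        φ₁ *ᵥ q + φ₂ *ᵥ ψ (z k))) :
    Filter.Tendsto z Filter.atTop (nhds zstar) ∧
      ∀ w : Fin n → ℝ, ICPsol A q ψ w → w = zstar := by
  classical
  obtain ⟨hφ₁d, hφ₁p⟩ := hφ₁
  obtain ⟨hφ₂d, hφ₂p⟩ := hφ₂
  set W := φ₁ * M₁ + φ₁ * φ + φ₂ with hWdef
  set Nφ := φ₁ * N₁ + φ₁ * φ with hNdef
  set R := matAbs Nφ + matAbs (φ₁ * A - φ₂) + 2 • (φ₂ * G) with hRdef
  set Lm := matAbs W⁻¹ * R with hLdef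
  set U : (Fin n → ℝ) → Fin n → ℝ :=
    fun x => (φ₁ * A - φ₂) *ᵥ x + φ₁ *ᵥ q + φ₂ *ᵥ ψ x with hUdef
  have hit' : ∀ k, z (k + 1) =
      W⁻¹ *ᵥ (Nφ *ᵥ z k + vecAbs (U (z k)) - φ₁ *ᵥ q + φ₂ *ᵥ ψ (z k)) := by
    intro k
    simp only [hUdef]
    exact hit k
  have hWinv : W⁻¹ * W = 1 := Matrix.nonsing_inv_mul W hns
  have hWN : W = Nφ + φ₁ * A + φ₂ := by
    rw [hWdef, hNdef, hsplit]
    noncomm_ring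
  -- nonnegativity of R and Lm
  have hRpos : ∀ i j, 0 ≤ R i j := by
    intro i j
    have hg : 0 ≤ (φ₂ * G) i j := by
      rw [Matrix.mul_apply]
      refine Finset.sum_nonneg fun m _ => ?_
      rcases eq_or_ne i m with h | h
      · subst h
        exact mul_nonneg (hφ₂p i).le (hG i j)
      · rw [hφ₂d h, zero_mul]
    have : R i j = |Nφ i j| + |(φ₁ * A - φ₂) i j| + ((φ₂ * G) i j + (φ₂ * G) i j) := by
      rw [hRdef, two_smul]
      simp [matAbs]
    rw [this]
    have h1 : (0:ℝ) ≤ |Nφ i j| := abs_nonneg _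
    have h2 : (0:ℝ) ≤ |(φ₁ * A - φ₂) i j| := abs_nonneg _
    linarith
  have hLpos : ∀ i j, 0 ≤ Lm i j := by
    intro i j
    rw [hLdef, Matrix.mul_apply]
    exact Finset.sum_nonneg fun l _ => mul_nonneg (abs_nonneg _) (hRpos l j)
  -- contraction estimate
  have hstep : ∀ x y : Fin n → ℝ, ∀ i,
      |(W⁻¹ *ᵥ (Nφ *ᵥ x + vecAbs (U x) - φ₁ *ᵥ q + φ₂ *ᵥ ψ x)) i -
        (W⁻¹ *ᵥ (Nφ *ᵥ y + vecAbs (U y) - φ₁ *ᵥ q + φ₂ *ᵥ ψ y)) i| ≤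
      (Lm *ᵥ vecAbs (x - y)) i := by
    intro x y i
    set e := vecAbs (x - y) with he
    set d : Fin n → ℝ := (Nφ *ᵥ x + vecAbs (U x) - φ₁ *ᵥ q + φ₂ *ᵥ ψ x) -
        (Nφ *ᵥ y + vecAbs (U y) - φ₁ *ᵥ q + φ₂ *ᵥ ψ y) with hdd
    have hGe : ∀ j, |ψ x j - ψ y j| ≤ (G *ᵥ e) j := by
      intro j
      simpa [he] using hψ x y j
    have hvd : ∀ j, vecAbs d j ≤ (R *ᵥ e) j := by
      intro j
      have hdj : d j = (Nφ *ᵥ (x - y)) j + (vecAbs (U x) j - vecAbs (U y) j) +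
          ((φ₂ *ᵥ (ψ x - ψ y)) j) := by
        rw [hdd]
        simp only [Pi.add_apply, Pi.sub_apply, Matrix.mulVec_sub]
        ring
      have hUxy : U x j - U y j = ((φ₁ * A - φ₂) *ᵥ (x - y)) j +
          φ₂ j j * (ψ x j - ψ y j) := by
        rw [hUdef]
        simp only [Pi.add_apply, Pi.sub_apply, Matrix.mulVec_sub,
          diag_mulVec hφ₂d]
        ring
      have hU : |U x j - U y j| ≤ (matAbs (φ₁ * A - φ₂) *ᵥ e) j + φ₂ j j * (G *ᵥ e) j := by
        rw [hUxy]
        refine (abs_add_le _ _).trans (add_le_add (abs_mulVec_le _ _ _) ?_)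
        rw [abs_mul, abs_of_pos (hφ₂p j)]
        exact mul_le_mul_of_nonneg_left (hGe j) (hφ₂p j).le
      have hUabs : |vecAbs (U x) j - vecAbs (U y) j| ≤ |U x j - U y j| :=
        abs_abs_sub_abs_le_abs_sub _ _
      have hψ2 : |(φ₂ *ᵥ (ψ x - ψ y)) j| ≤ φ₂ j j * (G *ᵥ e) j := by
        rw [diag_mulVec hφ₂d, abs_mul, abs_of_pos (hφ₂p j)]
        refine mul_le_mul_of_nonneg_left ?_ (hφ₂p j).le
        simpa using hGe j
      have hmain : |d j| ≤ (matAbs Nφ *ᵥ e) j +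
          ((matAbs (φ₁ * A - φ₂) *ᵥ e) j + φ₂ j j * (G *ᵥ e) j) +
          φ₂ j j * (G *ᵥ e) j := by
        rw [hdj]
        refine (abs_add_le _ _).trans (add_le_add ((abs_add_le _ _).trans
          (add_le_add (abs_mulVec_le _ _ _) (hUabs.trans hU))) hψ2)
      have hR' : (R *ᵥ e) j = (matAbs Nφ *ᵥ e) j + (matAbs (φ₁ * A - φ₂) *ᵥ e) j +
          (φ₂ j j * (G *ᵥ e) j + φ₂ j j * (G *ᵥ e) j) := by
        rw [hRdef, two_smul, Matrix.add_mulVec, Matrix.add_mulVec, Matrix.add_mulVec]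
        simp only [Pi.add_apply, ← Matrix.mulVec_mulVec, diag_mulVec hφ₂d]
      have : vecAbs d j = |d j| := rfl
      rw [this, hR']
      linarith
    calc |(W⁻¹ *ᵥ (Nφ *ᵥ x + vecAbs (U x) - φ₁ *ᵥ q + φ₂ *ᵥ ψ x)) i -
        (W⁻¹ *ᵥ (Nφ *ᵥ y + vecAbs (U y) - φ₁ *ᵥ q + φ₂ *ᵥ ψ y)) i|
        = |(W⁻¹ *ᵥ d) i| := by rw [hdd, Matrix.mulVec_sub]; rfl
      _ ≤ (matAbs W⁻¹ *ᵥ vecAbs d) i := abs_mulVec_le _ _ _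
      _ ≤ (matAbs W⁻¹ *ᵥ (R *ᵥ e)) i := mulVec_mono (fun _ _ => abs_nonneg _) hvd i
      _ = (Lm *ᵥ e) i := by rw [Matrix.mulVec_mulVec, ← hLdef]
  -- any solution is a fixed point
  have hfixed : ∀ w, ICPsol A q ψ w →
      W⁻¹ *ᵥ (Nφ *ᵥ w + vecAbs (U w) - φ₁ *ᵥ q + φ₂ *ᵥ ψ w) = w := by
    intro w hw
    obtain ⟨hr, hs, hrs⟩ := hw
    have hzero : ∀ j, (A *ᵥ w + q) j * (w - ψ w) j = 0 := by
      intro j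
      have h0 : ∑ l, (A *ᵥ w + q) l * (w - ψ w) l = 0 := hrs
      exact (Finset.sum_eq_zero_iff_of_nonneg
        (fun l _ => mul_nonneg (hr l) (hs l))).mp h0 j (Finset.mem_univ j)
    have harg : (Nφ *ᵥ w + vecAbs (U w) - φ₁ *ᵥ q + φ₂ *ᵥ ψ w) = W *ᵥ w := by
      funext j
      have h1 : U w j = φ₁ j j * (A *ᵥ w + q) j - φ₂ j j * (w - ψ w) j := by
        rw [hUdef]
        simp only [Pi.add_apply, Pi.sub_apply, Matrix.sub_mulVec,
          ← Matrix.mulVec_mulVec, diag_mulVec hφ₁d, diag_mulVec hφ₂d]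
        ring
      have h2 : |U w j| = φ₁ j j * (A *ᵥ w + q) j + φ₂ j j * (w - ψ w) j := by
        rw [h1]
        rcases mul_eq_zero.mp (hzero j) with h | h
        · rw [h, mul_zero, zero_sub, abs_neg,
            abs_of_nonneg (mul_nonneg (hφ₂p j).le (hs j)), zero_add]
        · rw [h, mul_zero, sub_zero,
            abs_of_nonneg (mul_nonneg (hφ₁p j).le (hr j)), add_zero]
      have h3 : (W *ᵥ w) j = (Nφ *ᵥ w) j + φ₁ j j * (A *ᵥ w) j + φ₂ j j * w j := by
        rw [hWN, Matrix.add_mulVec, Matrix.add_mulVec]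
        simp only [Pi.add_apply, ← Matrix.mulVec_mulVec, diag_mulVec hφ₁d,
          diag_mulVec hφ₂d]
      have h4 : vecAbs (U w) j = |U w j| := rfl
      simp only [Pi.add_apply, Pi.sub_apply, h4, h2, h3,
        diag_mulVec hφ₁d, diag_mulVec hφ₂d]
      ring
    rw [harg, Matrix.mulVec_mulVec, hWinv, Matrix.one_mulVec]
  -- error sequence
  set E : ℕ → Fin n → ℝ := fun k => vecAbs (z k - zstar) with hEdef
  have herr : ∀ k i, E (k + 1) i ≤ (Lm *ᵥ E k) i := by
    intro k i
    have h1 := hstep (z k) zstar i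
    rw [hfixed zstar hz] at h1
    rw [← hit' k] at h1
    exact h1
  have hEpow : ∀ k i, E k i ≤ ((Lm ^ k) *ᵥ E 0) i := by
    intro k
    induction k with
    | zero => intro i; rw [pow_zero, Matrix.one_mulVec]
    | succ k ih =>
      intro i
      calc E (k + 1) i ≤ (Lm *ᵥ E k) i := herr k i
        _ ≤ (Lm *ᵥ ((Lm ^ k) *ᵥ E 0)) i := mulVec_mono hLpos ih i
        _ = ((Lm ^ (k + 1)) *ᵥ E 0) i := by
            rw [Matrix.mulVec_mulVec, ← pow_succ']
  have hpow0 := pow_entry_tendsto_zero Lm hρ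
  have hbgen : ∀ v : Fin n → ℝ, ∀ i,
      Filter.Tendsto (fun k => ((Lm ^ k) *ᵥ v) i) Filter.atTop (nhds 0) := by
    intro v i
    have h := tendsto_finset_sum (Finset.univ : Finset (Fin n))
      (fun j _ => (hpow0 i j).mul_const (v j))
    simpa [Matrix.mulVec, dotProduct] using h
  constructor
  · rw [tendsto_pi_nhds]
    intro i
    have hzi : Filter.Tendsto (fun k => z k i - zstar i) Filter.atTop (nhds 0) := by
      refine squeeze_zero_norm (fun k => ?_) (hbgen (E 0) i)
      have : ‖z k i - zstar i‖ = E k i := by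
        simp [hEdef, vecAbs, Real.norm_eq_abs]
      rw [this]
      exact hEpow k i
    have := hzi.add_const (zstar i)
    simpa using this
  · intro w hw
    have he : ∀ k i, vecAbs (w - zstar) i ≤ ((Lm ^ k) *ᵥ vecAbs (w - zstar)) i := by
      have h1 : ∀ i, vecAbs (w - zstar) i ≤ (Lm *ᵥ vecAbs (w - zstar)) i := by
        intro i
        have h2 := hstep w zstar i
        rw [hfixed w hw, hfixed zstar hz] at h2
        exact h2
      intro k
      induction k with
      | zero => intro i; rw [pow_zero, Matrix.one_mulVec]
      | succ k ih =>
        intro i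
        calc vecAbs (w - zstar) i ≤ (Lm *ᵥ vecAbs (w - zstar)) i := h1 i
          _ ≤ (Lm *ᵥ ((Lm ^ k) *ᵥ vecAbs (w - zstar))) i := mulVec_mono hLpos ih i
          _ = ((Lm ^ (k + 1)) *ᵥ vecAbs (w - zstar)) i := by
              rw [Matrix.mulVec_mulVec, ← pow_succ']
    funext i
    have hle : vecAbs (w - zstar) i ≤ 0 :=
      ge_of_tendsto (hbgen (vecAbs (w - zstar)) i)
        (Filter.Eventually.of_forall fun k => he k i)
    have hge : 0 ≤ vecAbs (w - zstar) i := abs_nonneg _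
    have : |w i - zstar i| = 0 := le_antisymm hle hge
    exact sub_eq_zero.mp (abs_eq_zero.mp this)
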